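/- Consider the perturbed spin-1 Hamiltonian H_t(x,y,z) = [[z, x−iy+t, 0],[x+iy+t, 0, x−iy−t],[0, x+iy−t, −z]] with t ∈ ℝ, t ≠ 0. Then the real points (x,y,z) ∈ ℝ³ at which H_t(x,y,z) has a repeated eigenvalue are exactly the four points (t, 0, √2·t), (t, 0, −√2·t), (−t, 0, √2·t), (−t, 0, −√2·t). -/

import Mathlib

open Matrix

/-- The perturbed spin-1 Hamiltonian
`H_t(x,y,z) = [[z, x−iy+t, 0],[x+iy+t, 0, x−iy−t],[0, x+iy−t, −z]]` with `x,y,z,t ∈ ℝ`. -/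
noncomputable def pertSpinHam (t x y z : ℝ) : Matrix (Fin 3) (Fin 3) ℂ :=
  !![(z : ℂ), (x : ℂ) - Complex.I * (y : ℂ) + (t : ℂ), 0;
     (x : ℂ) + Complex.I * (y : ℂ) + (t : ℂ), 0, (x : ℂ) - Complex.I * (y : ℂ) - (t : ℂ);
     0, (x : ℂ) + Complex.I * (y : ℂ) - (t : ℂ), -(z : ℂ)]

open Polynomial

set_option maxHeartbeats 1000000

lemma pertSpinHam_charpoly (t x y z : ℝ) :
    (pertSpinHam t x y z).charpoly =
      X ^ 3 - C ((2*x^2+2*y^2+2*t^2+z^2 : ℝ) : ℂ) * X - C ((4*t*x*z : ℝ) : ℂ) := by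
  rw [Matrix.charpoly, Matrix.det_fin_three]
  simp [charmatrix_apply, pertSpinHam, diagonal]
  simp only [map_add, map_sub, _root_.map_mul, _root_.map_pow, map_neg, map_ofNat]
  have hI : (C Complex.I : ℂ[X]) ^ 2 = -1 := by
    rw [← _root_.map_pow, Complex.I_sq, map_neg, _root_.map_one]
  linear_combination (X * C (y:ℂ) ^ 2 * 2) * hI

lemma cubic_ne_zero (S P : ℂ) : (X ^ 3 - C S * X - C P : ℂ[X]) ≠ 0 := by
  intro h
  have h3 := congrArg (fun q : ℂ[X] => q.coeff 3) h
  simp [coeff_X_pow, coeff_C] at h3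

lemma cubic_deriv (S P : ℂ) :
    derivative (X ^ 3 - C S * X - C P : ℂ[X]) = C 3 * X ^ 2 - C S := by
  simp [derivative_X_pow]
  rw [show (3:ℂ) = 2 + 1 by norm_num, C_add, C_1]

lemma double_root_of_real (t x y z μ : ℝ)
    (he : μ^3 - (2*x^2+2*y^2+2*t^2+z^2)*μ - 4*t*x*z = 0)
    (hd : 3*μ^2 - (2*x^2+2*y^2+2*t^2+z^2) = 0) :
    2 ≤ (Matrix.charpoly (pertSpinHam t x y z)).rootMultiplicity (μ:ℂ) := by
  rw [pertSpinHam_charpoly]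
  refine (one_lt_rootMultiplicity_iff_isRoot (cubic_ne_zero _ _)).2 ⟨?_, ?_⟩
  · simp only [IsRoot, eval_sub, eval_mul, eval_pow, eval_X, eval_C]
    exact_mod_cast congrArg (fun r : ℝ => (r:ℂ)) he
  · rw [IsRoot, cubic_deriv]
    simp only [eval_sub, eval_mul, eval_pow, eval_X, eval_C]
    exact_mod_cast congrArg (fun r : ℝ => (r:ℂ)) hd

/-- for `t ≠ 0`, the real points `(x,y,z)` at which the perturbed spin-1
Hamiltonian `H_t(x,y,z)` has a repeated eigenvalue (i.e. the characteristic polynomial has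
a multiple root) are exactly `(±t, 0, ±√2·t)`. -/
theorem pert_spin1_weyl_points (t : ℝ) (ht : t ≠ 0) (x y z : ℝ) :
    (∃ μ : ℂ, 2 ≤ (Matrix.charpoly (pertSpinHam t x y z)).rootMultiplicity μ) ↔
      ((x = t ∧ y = 0 ∧ z = Real.sqrt 2 * t) ∨
       (x = t ∧ y = 0 ∧ z = -(Real.sqrt 2 * t)) ∨
       (x = -t ∧ y = 0 ∧ z = Real.sqrt 2 * t) ∨
       (x = -t ∧ y = 0 ∧ z = -(Real.sqrt 2 * t))) := by
  have ht2 : (0:ℝ) < t ^ 2 := by positivity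
  have hs2 : Real.sqrt 2 ^ 2 = 2 := Real.sq_sqrt (by norm_num)
  constructor
  · rintro ⟨μ, hμ⟩
    rw [pertSpinHam_charpoly] at hμ
    have h1 : 1 < rootMultiplicity μ (X ^ 3 - C ((2*x^2+2*y^2+2*t^2+z^2 : ℝ):ℂ) * X
        - C ((4*t*x*z : ℝ):ℂ) : ℂ[X]) := hμ
    rw [one_lt_rootMultiplicity_iff_isRoot (cubic_ne_zero _ _)] at h1
    obtain ⟨h0, hd⟩ := h1
    rw [IsRoot, cubic_deriv] at hd
    rw [IsRoot] at h0
    simp only [eval_sub, eval_mul, eval_pow, eval_X, eval_C] at h0 hd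
    have hSpos : (0:ℝ) < 2*x^2+2*y^2+2*t^2+z^2 := by positivity
    have hd' : ((2*x^2+2*y^2+2*t^2+z^2 : ℝ) : ℂ) = 3 * μ ^ 2 := by linear_combination -hd
    have hre2 := congrArg Complex.re hd'
    have him2 := congrArg Complex.im hd'
    simp only [Complex.ofReal_re, Complex.ofReal_im, Complex.mul_re, Complex.mul_im,
      Complex.re_ofNat, Complex.im_ofNat, sq, zero_mul, mul_zero, sub_zero, zero_sub,
      zero_add, add_zero] at hre2 him2
    have him : μ.im = 0 := by
      by_contra hb
      have hprod : μ.re * μ.im = 0 := by linarith [him2]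
      have hre0 : μ.re = 0 := by
        rcases mul_eq_zero.mp hprod with h | h
        · exact h
        · exact absurd h hb
      rw [hre0] at hre2
      have : 0 ≤ μ.im * μ.im := mul_self_nonneg μ.im
      linarith [hre2, hSpos]
    have hμeq : μ = ((μ.re : ℝ) : ℂ) := Complex.ext rfl (by simp [him])
    rw [hμeq] at h0 hd
    have h0r : μ.re ^ 3 - (2*x^2+2*y^2+2*t^2+z^2) * μ.re - 4*t*x*z = 0 := by
      exact_mod_cast h0
    have hdr : 3 * μ.re ^ 2 - (2*x^2+2*y^2+2*t^2+z^2) = 0 := by exact_mod_cast hd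
    have hPe : 4*t*x*z = -2*μ.re^3 := by linear_combination -h0r + μ.re * hdr
    have hSe : 2*x^2+2*y^2+2*t^2+z^2 = 3*μ.re^2 := by linear_combination -hdr
    have hkey : 4 * (2*x^2+2*y^2+2*t^2+z^2) ^ 3 = 27 * (4*t*x*z) ^ 2 := by
      rw [hSe, hPe]; ring
    -- pure real algebra with opaque variables
    obtain ⟨A, hA⟩ : ∃ A : ℝ, A = 2*x^2 := ⟨_, rfl⟩
    obtain ⟨B, hB⟩ : ∃ B : ℝ, B = 2*t^2 := ⟨_, rfl⟩
    obtain ⟨Cc, hC⟩ : ∃ Cc : ℝ, Cc = z^2 := ⟨_, rfl⟩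
    obtain ⟨w, hw⟩ : ∃ w : ℝ, w = 2*y^2 := ⟨_, rfl⟩
    have hkey2 : (A+B+Cc+w) ^ 3 = 27*A*B*Cc := by
      rw [hA, hB, hC, hw]; linear_combination hkey / 4
    have hAn : 0 ≤ A := by rw [hA]; positivity
    have hBp : 0 < B := by rw [hB]; linarith
    have hCn : 0 ≤ Cc := by rw [hC]; positivity
    have hwn : 0 ≤ w := by rw [hw]; positivity
    have hQpos : 0 < A + B + Cc := by linarith
    have p1 : 0 ≤ A*(B-Cc)^2 := mul_nonneg hAn (sq_nonneg _)
    have p2 : 0 ≤ B*(Cc-A)^2 := mul_nonneg hBp.le (sq_nonneg _)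
    have p3 : 0 ≤ Cc*(A-B)^2 := mul_nonneg hCn (sq_nonneg _)
    have q1 : 0 ≤ (A+B+Cc)*(A-B)^2 := mul_nonneg hQpos.le (sq_nonneg _)
    have q2 : 0 ≤ (A+B+Cc)*(B-Cc)^2 := mul_nonneg hQpos.le (sq_nonneg _)
    have q3 : 0 ≤ (A+B+Cc)*(Cc-A)^2 := mul_nonneg hQpos.le (sq_nonneg _)
    have hidD : 2*((A+B+Cc)^3 - 27*A*B*Cc)
        = ((A+B+Cc)*(A-B)^2 + (A+B+Cc)*(B-Cc)^2 + (A+B+Cc)*(Cc-A)^2)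
          + 6*(A*(B-Cc)^2 + B*(Cc-A)^2 + Cc*(A-B)^2) := by ring
    have hD : 0 ≤ (A+B+Cc)^3 - 27*A*B*Cc := by linarith
    have hsum : ((A+B+Cc)^3 - 27*A*B*Cc) + 3*(A+B+Cc)^2*w + 3*(A+B+Cc)*w^2 + w^3 = 0 := by
      linear_combination hkey2
    have hcube : 0 ≤ 3*(A+B+Cc)*w^2 := by positivity
    have hcube2 : 0 ≤ w^3 := by positivity
    have h3w : 3*(A+B+Cc)^2*w ≤ 0 := by linarith
    have hw0 : w = 0 := by
      rcases eq_or_lt_of_le hwn with h | h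
      · exact h.symm
      · exfalso
        have hpos : 0 < 3*(A+B+Cc)^2*w :=
          mul_pos (mul_pos (by norm_num) (pow_pos hQpos 2)) h
        linarith
    have hzero : (A+B+Cc)^3 - 27*A*B*Cc = 0 := by
      rw [hw0] at hsum; linarith [hsum]
    have e1 : (A+B+Cc)*(A-B)^2 ≤ 0 := by linarith
    have e2 : (A+B+Cc)*(B-Cc)^2 ≤ 0 := by linarith
    have hab2 : (A-B)^2 = 0 := by
      rcases mul_eq_zero.mp (le_antisymm e1 q1) with h | h
      · exact absurd h hQpos.ne'
      · exact h
    have hbc2 : (B-Cc)^2 = 0 := by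
      rcases mul_eq_zero.mp (le_antisymm e2 q2) with h | h
      · exact absurd h hQpos.ne'
      · exact h
    have hAB : A = B := by
      have := pow_eq_zero_iff (two_ne_zero) |>.mp hab2; linarith
    have hBC : B = Cc := by
      have := pow_eq_zero_iff (two_ne_zero) |>.mp hbc2; linarith
    have hy : y = 0 := by
      have : y ^ 2 = 0 := by rw [hw] at hw0; linarith
      exact pow_eq_zero_iff (two_ne_zero) |>.mp this
    have hxt : x = t ∨ x = -t := by
      have hxx : (x - t) * (x + t) = 0 := by
        rw [hA, hB] at hAB; linear_combination hAB / 2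
      rcases mul_eq_zero.mp hxx with h | h
      · left; linarith
      · right; linarith
    have hzt : z = Real.sqrt 2 * t ∨ z = -(Real.sqrt 2 * t) := by
      have hzz : (z - Real.sqrt 2 * t) * (z + Real.sqrt 2 * t) = 0 := by
        rw [hB, hC] at hBC
        linear_combination -hBC - t^2 * hs2
      rcases mul_eq_zero.mp hzz with h | h
      · left; linarith
      · right; linarith
    rcases hxt with h1 | h1 <;> rcases hzt with h2 | h2
    · exact Or.inl ⟨h1, hy, h2⟩
    · exact Or.inr (Or.inl ⟨h1, hy, h2⟩)
    · exact Or.inr (Or.inr (Or.inl ⟨h1, hy, h2⟩))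
    · exact Or.inr (Or.inr (Or.inr ⟨h1, hy, h2⟩))
  · rintro (⟨hx, hy, hz⟩ | ⟨hx, hy, hz⟩ | ⟨hx, hy, hz⟩ | ⟨hx, hy, hz⟩)
    · exact ⟨_, double_root_of_real t x y z (-(Real.sqrt 2 * t))
        (by rw [hx, hy, hz]; ring) (by rw [hx, hy, hz]; linear_combination 2 * t^2 * hs2)⟩
    · exact ⟨_, double_root_of_real t x y z (Real.sqrt 2 * t)
        (by rw [hx, hy, hz]; ring) (by rw [hx, hy, hz]; linear_combination 2 * t^2 * hs2)⟩
    · exact ⟨_, double_root_of_real t x y z (Real.sqrt 2 * t)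
        (by rw [hx, hy, hz]; ring) (by rw [hx, hy, hz]; linear_combination 2 * t^2 * hs2)⟩
    · exact ⟨_, double_root_of_real t x y z (-(Real.sqrt 2 * t))
        (by rw [hx, hy, hz]; ring) (by rw [hx, hy, hz]; linear_combination 2 * t^2 * hs2)⟩
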